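/- In the channel model with Markov encoders, for every 1 ≤ t ≤ n and every y_{1:t} ∈ 𝒴^t with P(Y_{1:t} = y_{1:t}) > 0, define the joint posterior μ_{t-1}(w,u) := P(W = w, U_t = u | Y_{1:t-1} = y_{1:t-1}) (with μ_0(w,u) := 𝟙{u = u₁}/|𝒲|). Then μ_t(w,u') = [Σ_{u,z} μ_{t-1}(w,u) · Q^f(y_t | φ_t(w,u)) · Q^b(z | y_t) · 𝟙{u' = G²(u, φ_t, z, w)}] / [Σ_{w̃,u} μ_{t-1}(w̃,u) · Q^f(y_t | φ_t(w̃,u))]. In particular, the update of the joint posterior on (W, U_{t+1}) is a function only of μ_{t-1}, the current encoding function φ_t, and y_t (it is policy-independent in the sense that no other encoding functions enter). -/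

import Mathlib

open scoped ENNReal Classical
open Finset

namespace NoisyFeedback

variable {W X Y Z U : Type*}

/-- Memory evolution: `mem G2 u1 φ w t zs` is the sender's memory after having
observed the feedback symbols `zs = z_{1:t}`. -/
def mem (G2 : U → (W × U → X) → Z → W → U) (u1 : U) (φ : ℕ → W × U → X) (w : W) :
    (t : ℕ) → (Fin t → Z) → U
  | 0, _ => u1
  | t + 1, zs => G2 (mem G2 u1 φ w t (Fin.init zs)) (φ t) (zs (Fin.last t)) w

variable [Fintype W] [Fintype X] [Fintype Y] [Fintype Z] [Fintype U]

/-- Joint pmf `P(W = w, Y_{1:t} = ys, Z_{1:t} = zs)` of the channel model with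
Markov encoders `φ`. -/
noncomputable def jointP (Qf : X → PMF Y) (Qb : Y → PMF Z)
    (G2 : U → (W × U → X) → Z → W → U) (u1 : U) (φ : ℕ → W × U → X)
    (t : ℕ) (w : W) (ys : Fin t → Y) (zs : Fin t → Z) : ℝ≥0∞ :=
  (Fintype.card W : ℝ≥0∞)⁻¹ *
    ∏ i : Fin t,
      Qf (φ i (w, mem G2 u1 φ w i (fun j => zs (Fin.castLE i.2.le j)))) (ys i) *
        Qb (ys i) (zs i)

/-- `P(Y_{1:t} = ys)`. -/
noncomputable def probY (Qf : X → PMF Y) (Qb : Y → PMF Z)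
    (G2 : U → (W × U → X) → Z → W → U) (u1 : U) (φ : ℕ → W × U → X)
    (t : ℕ) (ys : Fin t → Y) : ℝ≥0∞ :=
  ∑ w : W, ∑ zs : Fin t → Z, jointP Qf Qb G2 u1 φ t w ys zs

/-- `P(W = w, Y_{1:t} = ys)`. -/
noncomputable def probWY (Qf : X → PMF Y) (Qb : Y → PMF Z)
    (G2 : U → (W × U → X) → Z → W → U) (u1 : U) (φ : ℕ → W × U → X)
    (t : ℕ) (ys : Fin t → Y) (w : W) : ℝ≥0∞ :=
  ∑ zs : Fin t → Z, jointP Qf Qb G2 u1 φ t w ys zs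

/-- `P(W = w, Z_{1:t} = zs)`. -/
noncomputable def probWZ (Qf : X → PMF Y) (Qb : Y → PMF Z)
    (G2 : U → (W × U → X) → Z → W → U) (u1 : U) (φ : ℕ → W × U → X)
    (t : ℕ) (w : W) (zs : Fin t → Z) : ℝ≥0∞ :=
  ∑ ys : Fin t → Y, jointP Qf Qb G2 u1 φ t w ys zs

/-- `P(W = w, U_{t+1} = u, Y_{1:t} = ys)` (memory after `t` feedback symbols). -/
noncomputable def probWUY (Qf : X → PMF Y) (Qb : Y → PMF Z)
    (G2 : U → (W × U → X) → Z → W → U) (u1 : U) (φ : ℕ → W × U → X)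
    (t : ℕ) (ys : Fin t → Y) (w : W) (u : U) : ℝ≥0∞ :=
  ∑ zs : Fin t → Z,
    if mem G2 u1 φ w t zs = u then jointP Qf Qb G2 u1 φ t w ys zs else 0


section Aux

variable (Qf : X → PMF Y) (Qb : Y → PMF Z)
    (G2 : U → (W × U → X) → Z → W → U) (u1 : U) (φ : ℕ → W × U → X)

omit [Fintype X] [Fintype Y] [Fintype U] in
lemma jointP_succ (t : ℕ) (w : W) (ys : Fin (t+1) → Y) (zs : Fin (t+1) → Z) :
    jointP Qf Qb G2 u1 φ (t+1) w ys zs =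
      jointP Qf Qb G2 u1 φ t w (Fin.init ys) (Fin.init zs) *
        (Qf (φ t (w, mem G2 u1 φ w t (Fin.init zs))) (ys (Fin.last t)) *
          Qb (ys (Fin.last t)) (zs (Fin.last t))) := by
  unfold jointP
  rw [Fin.prod_univ_castSucc, ← mul_assoc]
  congr 2

omit [Fintype X] [Fintype Y] in
/-- sum over all memory values of probWUY recovers the `(w, ys)` marginal. -/
lemma sum_probWUY (t : ℕ) (ys : Fin t → Y) (w : W) :
    ∑ u : U, probWUY Qf Qb G2 u1 φ t ys w u =
      ∑ zs : Fin t → Z, jointP Qf Qb G2 u1 φ t w ys zs := by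
  unfold probWUY
  rw [Finset.sum_comm]
  refine Finset.sum_congr rfl fun zs _ => ?_
  simp

omit [Fintype X] [Fintype Y] in
/-- Qb sums to 1. -/
lemma sum_Qb (y : Y) : ∑ z : Z, (Qb y) z = 1 := by
  have := (Qb y).tsum_coe
  rwa [tsum_fintype] at this

omit [Fintype X] [Fintype U] in
lemma jointP_le_one (t : ℕ) (w : W) (ys : Fin t → Y) (zs : Fin t → Z) [Nonempty W] :
    jointP Qf Qb G2 u1 φ t w ys zs ≤ 1 := by
  unfold jointP
  calc (Fintype.card W : ℝ≥0∞)⁻¹ * _ ≤ 1 * 1 := by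
        refine mul_le_mul' ?_ ?_
        · simp [ENNReal.inv_le_one]
          exact_mod_cast Nat.one_le_iff_ne_zero.mpr Fintype.card_ne_zero
        · refine Finset.prod_le_one (fun _ _ => zero_le) fun i _ => ?_
          exact mul_le_one' (PMF.coe_le_one _ _) (PMF.coe_le_one _ _)
    _ = 1 := one_mul 1

omit [Fintype X] [Fintype U] in
lemma probY_ne_top (t : ℕ) (ys : Fin t → Y) [Nonempty W] :
    probY Qf Qb G2 u1 φ t ys ≠ ⊤ := by
  unfold probY
  refine (ENNReal.sum_lt_top.2 fun w _ => ?_).ne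
  refine ENNReal.sum_lt_top.2 fun zs _ => ?_
  exact lt_of_le_of_lt (jointP_le_one Qf Qb G2 u1 φ t w ys zs) ENNReal.one_lt_top

omit [Fintype X] [Fintype Y] in
/-- Key recursion for probWUY. -/
lemma probWUY_succ (t : ℕ) (ys : Fin (t+1) → Y) (w : W) (u' : U) :
    probWUY Qf Qb G2 u1 φ (t+1) ys w u' =
      ∑ u : U, ∑ z : Z,
        probWUY Qf Qb G2 u1 φ t (Fin.init ys) w u *
          Qf (φ t (w, u)) (ys (Fin.last t)) * Qb (ys (Fin.last t)) z *
          (if u' = G2 u (φ t) z w then 1 else 0) := by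
  unfold probWUY
  rw [← Equiv.sum_comp (Fin.snocEquiv (fun _ => Z))]
  rw [Fintype.sum_prod_type]
  rw [Finset.sum_comm]
  have hmem : ∀ (zs : Fin t → Z) (z : Z),
      mem G2 u1 φ w (t+1) (Fin.snoc zs z) = G2 (mem G2 u1 φ w t zs) (φ t) z w := by
    intro zs z
    simp [mem]
  have hkey : ∀ zs : Fin t → Z,
      ∑ z : Z, (if mem G2 u1 φ w (t+1) ((Fin.snocEquiv fun _ => Z) (z, zs)) = u' then
          jointP Qf Qb G2 u1 φ (t+1) w ys ((Fin.snocEquiv fun _ => Z) (z, zs)) else 0) =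
      ∑ u : U, ∑ z : Z,
        (if mem G2 u1 φ w t zs = u then jointP Qf Qb G2 u1 φ t w (Fin.init ys) zs else 0) *
          Qf (φ t (w, u)) (ys (Fin.last t)) * Qb (ys (Fin.last t)) z *
          (if u' = G2 u (φ t) z w then 1 else 0) := by
    intro zs
    rw [Finset.sum_comm]
    refine Finset.sum_congr rfl fun z _ => ?_
    have he : (Fin.snocEquiv fun _ => Z) (z, zs) = Fin.snoc zs z := rfl
    rw [he, hmem zs z, jointP_succ]
    simp only [Fin.init_snoc, Fin.snoc_last]
    rw [Finset.sum_eq_single (mem G2 u1 φ w t zs)]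
    · simp only [eq_self_iff_true, if_true]
      by_cases h : u' = G2 (mem G2 u1 φ w t zs) (φ t) z w
      · rw [if_pos h.symm, if_pos h, mul_one]; ring
      · rw [if_neg (Ne.symm h), if_neg h, mul_zero]
    · intro b _ hb
      simp [Ne.symm hb]
    · simp
  rw [Finset.sum_congr rfl fun zs _ => hkey zs]
  rw [Finset.sum_comm]
  refine Finset.sum_congr rfl fun u _ => ?_
  rw [Finset.sum_comm]
  refine Finset.sum_congr rfl fun z _ => ?_
  rw [Finset.sum_mul, Finset.sum_mul, Finset.sum_mul]

omit [Fintype X] in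
/-- Recursion for probY. -/
lemma probY_succ (t : ℕ) (ys : Fin (t+1) → Y) :
    probY Qf Qb G2 u1 φ (t+1) ys =
      ∑ w' : W, ∑ u : U,
        probWUY Qf Qb G2 u1 φ t (Fin.init ys) w' u *
          Qf (φ t (w', u)) (ys (Fin.last t)) := by
  unfold probY
  refine Finset.sum_congr rfl fun w' _ => ?_
  have step : ∀ zs : Fin t → Z,
      ∑ z : Z, jointP Qf Qb G2 u1 φ (t+1) w' ys ((Fin.snocEquiv fun _ => Z) (z, zs)) =
        jointP Qf Qb G2 u1 φ t w' (Fin.init ys) zs *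
          Qf (φ t (w', mem G2 u1 φ w' t zs)) (ys (Fin.last t)) := by
    intro zs
    have h1 : ∀ z : Z, jointP Qf Qb G2 u1 φ (t+1) w' ys ((Fin.snocEquiv fun _ => Z) (z, zs)) =
        jointP Qf Qb G2 u1 φ t w' (Fin.init ys) zs *
          Qf (φ t (w', mem G2 u1 φ w' t zs)) (ys (Fin.last t)) * Qb (ys (Fin.last t)) z := by
      intro z
      have he : (Fin.snocEquiv fun _ => Z) (z, zs) = Fin.snoc zs z := rfl
      rw [he, jointP_succ]
      simp only [Fin.init_snoc, Fin.snoc_last]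
      ring
    rw [Finset.sum_congr rfl fun z _ => h1 z, ← Finset.mul_sum, sum_Qb, mul_one]
  have hR : ∑ u : U, probWUY Qf Qb G2 u1 φ t (Fin.init ys) w' u *
        Qf (φ t (w', u)) (ys (Fin.last t)) =
      ∑ zs : Fin t → Z, jointP Qf Qb G2 u1 φ t w' (Fin.init ys) zs *
        Qf (φ t (w', mem G2 u1 φ w' t zs)) (ys (Fin.last t)) := by
    unfold probWUY
    simp only [Finset.sum_mul]
    rw [Finset.sum_comm]
    refine Finset.sum_congr rfl fun zs _ => ?_
    rw [Finset.sum_eq_single (mem G2 u1 φ w' t zs)]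
    · simp
    · intro b _ hb
      simp [Ne.symm hb]
    · simp
  rw [hR, ← Equiv.sum_comp (Fin.snocEquiv (fun _ => Z)), Fintype.sum_prod_type,
    Finset.sum_comm]
  exact Finset.sum_congr rfl fun zs _ => step zs

omit [Fintype X] in
lemma probY_succ_le (t : ℕ) (ys : Fin (t+1) → Y) :
    probY Qf Qb G2 u1 φ (t+1) ys ≤ probY Qf Qb G2 u1 φ t (Fin.init ys) := by
  rw [probY_succ]
  unfold probY
  refine Finset.sum_le_sum fun w' _ => ?_
  calc ∑ u : U, probWUY Qf Qb G2 u1 φ t (Fin.init ys) w' u *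
        Qf (φ t (w', u)) (ys (Fin.last t))
      ≤ ∑ u : U, probWUY Qf Qb G2 u1 φ t (Fin.init ys) w' u * 1 :=
        Finset.sum_le_sum fun u _ => mul_le_mul_right (PMF.coe_le_one _ _) _
    _ = ∑ zs : Fin t → Z, jointP Qf Qb G2 u1 φ t w' (Fin.init ys) zs := by
        simp only [mul_one]; exact sum_probWUY Qf Qb G2 u1 φ t (Fin.init ys) w'

end Aux

/-- **Policy-independent update of the joint posterior on `(W, U_{t+1})`** (Statement 2).
For `1 ≤ t ≤ n` (here `t+1 ≤ n` in 0-based indexing, `ys : Fin (t+1) → Y` is `y_{1:t+1}`),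
if `P(Y_{1:t+1} = ys) > 0` then, writing `μ_{t}(w,u) = P(W = w, U_{t+1} = u | Y_{1:t})`,
the posterior `μ_{t+1}` is obtained from `μ_t`, the current encoding function `φ t`
and the new output `ys (last)` alone, by Bayes' rule. -/
theorem posterior_WU_update [Nonempty W] [Nonempty X] [Nonempty Y] [Nonempty Z] [Nonempty U]
    (Qf : X → PMF Y) (Qb : Y → PMF Z)
    (G2 : U → (W × U → X) → Z → W → U) (u1 : U) (φ : ℕ → W × U → X)
    (n t : ℕ) (ht : t + 1 ≤ n) (ys : Fin (t + 1) → Y)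
    (hpos : 0 < probY Qf Qb G2 u1 φ (t + 1) ys)
    (w : W) (u' : U) :
    probWUY Qf Qb G2 u1 φ (t + 1) ys w u' / probY Qf Qb G2 u1 φ (t + 1) ys =
      (∑ u : U, ∑ z : Z,
          (probWUY Qf Qb G2 u1 φ t (Fin.init ys) w u /
              probY Qf Qb G2 u1 φ t (Fin.init ys)) *
            Qf (φ t (w, u)) (ys (Fin.last t)) * Qb (ys (Fin.last t)) z *
            (if u' = G2 u (φ t) z w then 1 else 0)) /
        ∑ w' : W, ∑ u : U,
          (probWUY Qf Qb G2 u1 φ t (Fin.init ys) w' u /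
              probY Qf Qb G2 u1 φ t (Fin.init ys)) *
            Qf (φ t (w', u)) (ys (Fin.last t)) := by
  set D := probY Qf Qb G2 u1 φ t (Fin.init ys) with hD
  have hD0 : D ≠ 0 :=
    (lt_of_lt_of_le hpos (probY_succ_le Qf Qb G2 u1 φ t ys)).ne'
  have hDtop : D ≠ ⊤ := probY_ne_top Qf Qb G2 u1 φ t (Fin.init ys)
  have hnum : (∑ u : U, ∑ z : Z,
      (probWUY Qf Qb G2 u1 φ t (Fin.init ys) w u / D) *
        Qf (φ t (w, u)) (ys (Fin.last t)) * Qb (ys (Fin.last t)) z *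
        (if u' = G2 u (φ t) z w then 1 else 0)) =
      probWUY Qf Qb G2 u1 φ (t+1) ys w u' * D⁻¹ := by
    rw [probWUY_succ]
    rw [Finset.sum_mul]
    refine Finset.sum_congr rfl fun u _ => ?_
    rw [Finset.sum_mul]
    refine Finset.sum_congr rfl fun z _ => ?_
    rw [div_eq_mul_inv]
    ring
  have hden : (∑ w' : W, ∑ u : U,
      (probWUY Qf Qb G2 u1 φ t (Fin.init ys) w' u / D) *
        Qf (φ t (w', u)) (ys (Fin.last t))) =
      probY Qf Qb G2 u1 φ (t+1) ys * D⁻¹ := by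
    rw [probY_succ]
    rw [Finset.sum_mul]
    refine Finset.sum_congr rfl fun w' _ => ?_
    rw [Finset.sum_mul]
    refine Finset.sum_congr rfl fun u _ => ?_
    rw [div_eq_mul_inv]
    ring
  rw [hnum, hden, ENNReal.mul_div_mul_right _ _ (ENNReal.inv_ne_zero.2 hDtop)
    (ENNReal.inv_ne_top.2 hD0)]

end NoisyFeedback
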